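/- arXiv:2206.12833 — 3 statements merged into one kernel-verified Lean document; each statement's English description precedes it below -/
import Mathlib

section
/- For every real x > 0, e^(−x)/(1 − e^(−x))² < (1 + x)/x². -/
theorem exp_neg_div_sq_bound (x : ℝ) (hx : 0 < x) :
    Real.exp (-x) / (1 - Real.exp (-x)) ^ 2 < (1 + x) / x ^ 2 := by
  have h1 : Real.exp (-x) < 1 := Real.exp_lt_one_iff.mpr (by linarith)
  have hs : 0 < 1 - Real.exp (-x) := by linarith
  have hsinh : x / 2 < Real.sinh (x / 2) := Real.self_lt_sinh_iff.mpr (by linarith)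
  have hprod : (1 - Real.exp (-x)) * Real.exp (x / 2) = 2 * Real.sinh (x / 2) := by
    rw [Real.sinh_eq]
    have : Real.exp (-x) * Real.exp (x / 2) = Real.exp (-(x / 2)) := by
      rw [← Real.exp_add]; ring_nf
    ring_nf
    ring_nf at this
    nlinarith [this]
  have hx2 : x < (1 - Real.exp (-x)) * Real.exp (x / 2) := by
    rw [hprod]; linarith
  have key : x * Real.exp (-(x / 2)) < 1 - Real.exp (-x) := by
    have he : 0 < Real.exp (x / 2) := Real.exp_pos _
    rw [← mul_lt_mul_iff_of_pos_right he] at *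
    calc x * Real.exp (-(x / 2)) * Real.exp (x / 2)
        = x * (Real.exp (-(x / 2) + x / 2)) := by rw [Real.exp_add]; ring
      _ = x := by simp
      _ < (1 - Real.exp (-x)) * Real.exp (x / 2) := hx2
  have hsq : Real.exp (-x) * x ^ 2 < (1 - Real.exp (-x)) ^ 2 := by
    have h0 : 0 < x * Real.exp (-(x / 2)) := by positivity
    have := mul_self_lt_mul_self (le_of_lt h0) key
    have hee : Real.exp (-(x / 2)) * Real.exp (-(x / 2)) = Real.exp (-x) := by
      rw [← Real.exp_add]; ring_nf
    nlinarith [this]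
  rw [div_lt_div_iff₀ (by positivity) (by positivity)]
  nlinarith [sq_nonneg (1 - Real.exp (-x)), hx]
end

section
/- For every integer n ≥ 1, the overpartition function satisfies p̄(n) < e^(π√n). -/
open Real Finset

set_option maxHeartbeats 1000000

lemma hasSum_odd_inv_sq : HasSum (fun k : ℕ => (1:ℝ) / (2*(k:ℝ)+1)^2) (π^2/8) := by
  have h := hasSum_zeta_two
  have heven : HasSum (fun k : ℕ => (1:ℝ) / ((2*k : ℕ):ℝ)^2) (π^2/24) := by
    have h4 := h.mul_left (1/4)
    have he : (1/4) * (π^2/6) = π^2/24 := by ring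
    rw [he] at h4
    convert h4 using 2 with k
    · rfl
    push_cast
    rcases eq_or_ne (k:ℝ) 0 with hk | hk
    · simp [hk]
    · field_simp; ring
  have hodd : Summable (fun k : ℕ => (1:ℝ) / ((2*k+1 : ℕ):ℝ)^2) := by
    have inj : Function.Injective (fun k : ℕ => 2*k+1) := by
      intro a b hab; simpa using hab
    exact h.summable.comp_injective inj
  have hsum := hodd.hasSum
  have heq := h.unique (heven.even_add_odd hsum)
  have hval : ∑' k : ℕ, (1:ℝ)/((2*k+1:ℕ):ℝ)^2 = π^2/8 := by linarith
  have hfun : (fun k : ℕ => (1:ℝ)/((2*k+1:ℕ):ℝ)^2) = fun k : ℕ => (1:ℝ)/(2*(k:ℝ)+1)^2 := by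
    funext k; push_cast; ring
  rw [hval, hfun] at hsum
  exact hsum

lemma aux_pow_div (x : ℝ) (hx0 : 0 < x) (hx1 : x < 1) (i : ℕ) (hi : 1 ≤ i) :
    x^i / (1 - x^i) ≤ x / (i * (1 - x)) := by
  obtain ⟨j, rfl⟩ : ∃ j, i = j + 1 := ⟨i - 1, by omega⟩
  have hxi : x^(j+1) < 1 := pow_lt_one₀ hx0.le hx1 (by omega)
  have h1x : (0:ℝ) < 1 - x := by linarith
  have hgeom : (1:ℝ) - x^(j+1) = (1-x) * ∑ m ∈ range (j+1), x^m := by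
    have := mul_geom_sum x (j+1)
    nlinarith [this]
  have hS : ((j:ℝ)+1) * x^j ≤ ∑ m ∈ range (j+1), x^m := by
    calc ((j:ℝ)+1) * x^j = ∑ _m ∈ range (j+1), x^j := by
          rw [Finset.sum_const, card_range, nsmul_eq_mul]; push_cast; ring
      _ ≤ ∑ m ∈ range (j+1), x^m := by
          apply Finset.sum_le_sum
          intro m hm
          exact pow_le_pow_of_le_one hx0.le hx1.le (by simpa [Nat.lt_succ_iff] using hm)
  have hxj : (0:ℝ) < x^j := pow_pos hx0 j
  have hden : (0:ℝ) < ((j:ℝ)+1) * x^j * (1-x) := by positivity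
  have h2 : ((j:ℝ)+1) * x^j * (1-x) ≤ 1 - x^(j+1) := by
    rw [hgeom]; nlinarith [hS]
  calc x^(j+1) / (1 - x^(j+1)) ≤ x^(j+1) / (((j:ℝ)+1) * x^j * (1-x)) := by
        apply div_le_div_of_nonneg_left (by positivity) hden h2
    _ = x / (((j:ℝ)+1) * (1-x)) := by
        rw [pow_succ]
        field_simp
    _ = x / ((((j:ℕ)+1 : ℕ):ℝ) * (1-x)) := by push_cast; ring_nf

lemma prod_bound (n : ℕ) {x : ℝ} (hx0 : 0 < x) (hx1 : x < 1) :
    ∏ j ∈ Icc 1 n, ((1 + x^j) / (1 - x^j)) ≤ Real.exp (π^2/4 * (x/(1-x))) := by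
  have h1x : (0:ℝ) < 1 - x := by linarith
  have hxj1 : ∀ j ∈ Icc 1 n, x^j < 1 := fun j hj =>
    pow_lt_one₀ hx0.le hx1 (by have := (mem_Icc.mp hj).1; omega)
  have hxjpos : ∀ j : ℕ, (0:ℝ) < x^j := fun j => pow_pos hx0 j
  -- each factor equals exp (log (1+x^j) - log (1-x^j))
  have hfac : ∀ j ∈ Icc 1 n, (1 + x^j) / (1 - x^j)
      = Real.exp (Real.log (1 + x^j) - Real.log (1 - x^j)) := by
    intro j hj
    rw [Real.exp_sub, Real.exp_log (by positivity), Real.exp_log (by linarith [hxj1 j hj])]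
  rw [Finset.prod_congr rfl hfac, ← Real.exp_sum, Real.exp_le_exp]
  -- series expansion per j
  set c : ℕ → ℕ → ℝ := fun j k => (2:ℝ) * (1 / (2*(k:ℝ)+1)) * (x^j) ^ (2*k+1) with hc
  have hs : ∀ j ∈ Icc 1 n, HasSum (c j) (Real.log (1 + x^j) - Real.log (1 - x^j)) := by
    intro j hj
    have habs : |x^j| < 1 := by
      rw [abs_of_pos (hxjpos j)]; exact hxj1 j hj
    simpa [hc] using hasSum_log_sub_log_of_abs_lt_one habs
  have hsumm : ∀ j ∈ Icc 1 n, Summable (c j) := fun j hj => (hs j hj).summable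
  have hswap : ∑ j ∈ Icc 1 n, (Real.log (1 + x^j) - Real.log (1 - x^j))
      = ∑' k, ∑ j ∈ Icc 1 n, c j k := by
    rw [Summable.tsum_finsetSum hsumm]
    exact Finset.sum_congr rfl fun j hj => ((hs j hj).tsum_eq).symm
  rw [hswap]
  -- termwise bound
  set d : ℕ → ℝ := fun k => (2:ℝ) * (1 / (2*(k:ℝ)+1)^2) * (x/(1-x)) with hd
  have hdsum : HasSum d (π^2/4 * (x/(1-x))) := by
    have := (hasSum_odd_inv_sq.mul_left 2).mul_right (x/(1-x))
    convert this using 1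
    · rfl
    ring
  have hterm : ∀ k, ∑ j ∈ Icc 1 n, c j k ≤ d k := by
    intro k
    have hk1 : (0:ℝ) < 2*(k:ℝ)+1 := by positivity
    have hy0 : (0:ℝ) < x^(2*k+1) := hxjpos _
    have hy1 : x^(2*k+1) < 1 := pow_lt_one₀ hx0.le hx1 (by omega)
    have hgeo : ∑ j ∈ Icc 1 n, (x^(2*k+1))^j ≤ x^(2*k+1) / (1 - x^(2*k+1)) := by
      set y := x^(2*k+1)
      have : ∑ j ∈ Icc 1 n, y^j = y * ∑ j ∈ range n, y^j := by
        rw [show Icc 1 n = Ico 1 (n+1) by rfl, Finset.sum_Ico_eq_sum_range]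
        rw [Finset.mul_sum]
        simp [pow_add]
      rw [this, div_eq_mul_inv]
      apply mul_le_mul_of_nonneg_left _ hy0.le
      calc ∑ j ∈ range n, y^j ≤ ∑' j : ℕ, y^j := by
            apply Summable.sum_le_tsum
            · intro i _; positivity
            · exact summable_geometric_of_lt_one hy0.le hy1
        _ = (1 - y)⁻¹ := tsum_geometric_of_lt_one hy0.le hy1
    calc ∑ j ∈ Icc 1 n, c j k
        = (2:ℝ) * (1 / (2*(k:ℝ)+1)) * ∑ j ∈ Icc 1 n, (x^(2*k+1))^j := by
          rw [Finset.mul_sum]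
          exact Finset.sum_congr rfl fun j hj => by
            simp [hc, ← pow_mul, Nat.mul_comm j (2*k+1)]
      _ ≤ (2:ℝ) * (1 / (2*(k:ℝ)+1)) * (x^(2*k+1) / (1 - x^(2*k+1))) := by
          apply mul_le_mul_of_nonneg_left hgeo (by positivity)
      _ ≤ (2:ℝ) * (1 / (2*(k:ℝ)+1)) * (x / ((2*k+1 : ℕ) * (1-x))) := by
          apply mul_le_mul_of_nonneg_left (aux_pow_div x hx0 hx1 (2*k+1) (by omega)) (by positivity)
      _ = d k := by
          simp only [hd]
          push_cast
          field_simp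
  calc ∑' k, ∑ j ∈ Icc 1 n, c j k ≤ ∑' k, d k := by
        apply Summable.tsum_le_tsum hterm _ hdsum.summable
        exact summable_sum hsumm
    _ = π^2/4 * (x/(1-x)) := hdsum.tsum_eq

lemma sum_distincts_le (n : ℕ) {x : ℝ} (hx0 : 0 ≤ x) :
    ∑ k ∈ range (n+1), ((Nat.Partition.distincts k).card : ℝ) * x^k
      ≤ ∏ j ∈ Icc 1 n, (1 + x^j) := by
  classical
  set S := (range (n+1)).sigma (fun k => Nat.Partition.distincts k) with hS
  have hnodup : ∀ σ ∈ S, σ.2.parts.Nodup := by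
    intro σ hσ
    have := (Finset.mem_sigma.mp hσ).2
    simpa [Nat.Partition.distincts, Finset.mem_filter] using this
  have hk : ∀ σ ∈ S, σ.1 ≤ n := by
    intro σ hσ
    have := (Finset.mem_sigma.mp hσ).1
    simpa [Nat.lt_succ_iff] using this
  set F : (Σ k, Nat.Partition k) → Finset ℕ := fun σ => σ.2.parts.toFinset with hF
  have hFsum : ∀ σ ∈ S, ∑ j ∈ F σ, j = σ.1 := by
    intro σ hσ
    show ∑ j ∈ σ.2.parts.toFinset, j = σ.1
    rw [← Multiset.toFinset_eq (hnodup σ hσ)]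
    show (Multiset.map id σ.2.parts).sum = σ.1
    rw [Multiset.map_id]
    exact σ.2.parts_sum
  have hmem : ∀ σ ∈ S, F σ ∈ (Icc 1 n).powerset := by
    intro σ hσ
    rw [Finset.mem_powerset]
    intro j hj
    rw [hF, Multiset.mem_toFinset] at hj
    have h1 : 1 ≤ j := σ.2.parts_pos hj
    have h2 : j ≤ σ.2.parts.sum := Multiset.single_le_sum (fun y _ => Nat.zero_le y) j hj
    rw [σ.2.parts_sum] at h2
    exact Finset.mem_Icc.mpr ⟨h1, le_trans h2 (hk σ hσ)⟩
  have hinj : ∀ σ ∈ S, ∀ τ ∈ S, F σ = F τ → σ = τ := by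
    intro σ hσ τ hτ h
    obtain ⟨k, p⟩ := σ
    obtain ⟨k', p'⟩ := τ
    have hp : p.parts = p'.parts :=
      Multiset.Nodup.toFinset_inj (hnodup _ hσ) (hnodup _ hτ) h
    have hkk : k = k' := by rw [← p.parts_sum, ← p'.parts_sum, hp]
    subst hkk
    exact congrArg (Sigma.mk k) (Nat.Partition.ext hp)
  calc ∑ k ∈ range (n+1), ((Nat.Partition.distincts k).card : ℝ) * x^k
      = ∑ σ ∈ S, x ^ σ.1 := by
        rw [hS, Finset.sum_sigma]
        exact Finset.sum_congr rfl fun k _ => by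
          simp [Finset.sum_const, nsmul_eq_mul, mul_comm]
    _ = ∑ σ ∈ S, x ^ (∑ j ∈ F σ, j) := by
        exact Finset.sum_congr rfl fun σ hσ => by rw [hFsum σ hσ]
    _ = ∑ T ∈ S.image F, x ^ (∑ j ∈ T, j) :=
        (Finset.sum_image (f := fun T => x ^ (∑ j ∈ T, j)) hinj).symm
    _ ≤ ∑ T ∈ (Icc 1 n).powerset, x ^ (∑ j ∈ T, j) := by
        apply Finset.sum_le_sum_of_subset_of_nonneg
        · intro T hT
          obtain ⟨σ, hσ, rfl⟩ := Finset.mem_image.mp hT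
          exact hmem σ hσ
        · intro T _ _; positivity
    _ = ∑ T ∈ (Icc 1 n).powerset, ∏ j ∈ T, x ^ j :=
        Finset.sum_congr rfl fun T _ => by
          simpa using (Finset.prod_pow_eq_pow_sum T id x).symm
    _ = ∏ j ∈ Icc 1 n, (x^j + 1) := by
        have h := Finset.prod_add (fun j => x^j) (fun _ => (1:ℝ)) (Icc 1 n)
        simp only [Finset.prod_const_one, mul_one] at h
        rw [h]
    _ = ∏ j ∈ Icc 1 n, (1 + x^j) := Finset.prod_congr rfl fun j _ => by ring

lemma sum_partitions_le (n : ℕ) {x : ℝ} (hx0 : 0 ≤ x) :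
    ∑ m ∈ range (n+1), (Fintype.card (Nat.Partition m) : ℝ) * x^m
      ≤ ∏ j ∈ Icc 1 n, ∑ i ∈ range (n+1), (x^j)^i := by
  classical
  set S := (range (n+1)).sigma (fun m => (Finset.univ : Finset (Nat.Partition m))) with hS
  have hm : ∀ σ ∈ S, σ.1 ≤ n := by
    intro σ hσ
    have := (Finset.mem_sigma.mp hσ).1
    simpa [Nat.lt_succ_iff] using this
  have hparts_le : ∀ (σ : Σ m, Nat.Partition m), ∀ j ∈ σ.2.parts, 1 ≤ j ∧ j ≤ σ.1 := by
    intro σ j hj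
    refine ⟨σ.2.parts_pos hj, ?_⟩
    have h2 : j ≤ σ.2.parts.sum := Multiset.single_le_sum (fun y _ => Nat.zero_le y) j hj
    rwa [σ.2.parts_sum] at h2
  -- the multiplicity function
  set G : (Σ m, Nat.Partition m) → (Fin n → ℕ) :=
    fun σ i => σ.2.parts.count (1 + (i:ℕ)) with hG
  have hcount_le : ∀ σ ∈ S, ∀ a : ℕ, σ.2.parts.count a ≤ n := by
    intro σ hσ a
    calc σ.2.parts.count a ≤ Multiset.card σ.2.parts := Multiset.count_le_card a _
      _ = Multiset.card σ.2.parts • 1 := by simp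
      _ ≤ σ.2.parts.sum := Multiset.card_nsmul_le_sum (fun y hy => (hparts_le σ y hy).1)
      _ = σ.1 := σ.2.parts_sum
      _ ≤ n := hm σ hσ
  have hmem : ∀ σ ∈ S, G σ ∈ Fintype.piFinset (fun _ : Fin n => range (n+1)) := by
    intro σ hσ
    rw [Fintype.mem_piFinset]
    intro i
    rw [Finset.mem_range, Nat.lt_succ_iff]
    exact hcount_le σ hσ _
  -- the weight identity
  have hweight : ∀ σ ∈ S, ∑ i : Fin n, (1 + (i:ℕ)) * G σ i = σ.1 := by
    intro σ hσ
    have hmn := hm σ hσ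
    have hple := hparts_le σ
    obtain ⟨m, p⟩ := σ
    have h1 : ∑ a ∈ p.parts.toFinset, p.parts.count a * a = m := by
      have h0 := congrArg Multiset.sum (Multiset.toFinset_sum_count_nsmul_eq p.parts)
      rw [p.parts_sum] at h0
      refine Eq.trans ?_ h0
      rw [← Multiset.coe_sumAddMonoidHom, map_sum]
      refine Finset.sum_congr rfl fun a _ => ?_
      show Multiset.count a p.parts * a = Multiset.sumAddMonoidHom (Multiset.count a p.parts • {a})
      rw [map_nsmul, Multiset.coe_sumAddMonoidHom]
      simp [mul_comm]
    have hsub : p.parts.toFinset ⊆ Icc 1 n := by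
      intro j hj
      rw [Multiset.mem_toFinset] at hj
      obtain ⟨ha, hb⟩ := hple j hj
      exact Finset.mem_Icc.mpr ⟨ha, le_trans hb hmn⟩
    have h2 : ∑ j ∈ Icc 1 n, p.parts.count j * j = m := by
      refine Eq.trans (Finset.sum_subset hsub ?_).symm h1
      intro j _ hj
      rw [Multiset.mem_toFinset] at hj
      rw [Multiset.count_eq_zero.mpr hj, zero_mul]
    show ∑ i : Fin n, (1 + (i:ℕ)) * p.parts.count (1 + (i:ℕ)) = m
    refine Eq.trans ?_ h2
    rw [show Icc 1 n = Ico 1 (n+1) by rfl, Finset.sum_Ico_eq_sum_range]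
    simp only [Nat.add_sub_cancel]
    rw [← Fin.sum_univ_eq_sum_range (fun i => p.parts.count (1 + i) * (1 + i)) n]
    exact Finset.sum_congr rfl fun i _ => by ring
  -- injectivity
  have hinj : ∀ σ ∈ S, ∀ τ ∈ S, G σ = G τ → σ = τ := by
    intro σ hσ τ hτ h
    have hp : σ.2.parts = τ.2.parts := by
      ext a
      rcases Nat.eq_zero_or_pos a with rfl | ha
      · rw [Multiset.count_eq_zero.mpr, Multiset.count_eq_zero.mpr]
        · intro hmem'; exact absurd (τ.2.parts_pos hmem') (lt_irrefl 0)
        · intro hmem'; exact absurd (σ.2.parts_pos hmem') (lt_irrefl 0)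
      rcases le_or_gt a n with han | han
      · have hi : a - 1 < n := by omega
        have := congrFun h ⟨a - 1, hi⟩
        rw [hG] at this
        simpa [show 1 + (a - 1) = a by omega] using this
      · rw [Multiset.count_eq_zero.mpr, Multiset.count_eq_zero.mpr]
        · intro hmem'
          exact absurd ((hparts_le τ a hmem').2.trans (hm τ hτ)) (by omega)
        · intro hmem'
          exact absurd ((hparts_le σ a hmem').2.trans (hm σ hσ)) (by omega)
    obtain ⟨m, p⟩ := σ
    obtain ⟨m', p'⟩ := τ
    have hmm : m = m' := by rw [← p.parts_sum, ← p'.parts_sum, hp]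
    subst hmm
    exact congrArg (Sigma.mk m) (Nat.Partition.ext hp)
  calc ∑ m ∈ range (n+1), (Fintype.card (Nat.Partition m) : ℝ) * x^m
      = ∑ σ ∈ S, x ^ σ.1 := by
        rw [hS, Finset.sum_sigma]
        exact Finset.sum_congr rfl fun m _ => by
          simp [Finset.sum_const, nsmul_eq_mul, mul_comm, Finset.card_univ]
    _ = ∑ σ ∈ S, ∏ i : Fin n, (x ^ (1 + (i:ℕ))) ^ (G σ i) := by
        apply Finset.sum_congr rfl
        intro σ hσ
        rw [← hweight σ hσ]
        rw [← Finset.prod_pow_eq_pow_sum]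
        exact Finset.prod_congr rfl fun i _ => by rw [← pow_mul]
    _ = ∑ g ∈ S.image G, ∏ i : Fin n, (x ^ (1 + (i:ℕ))) ^ (g i) :=
        (Finset.sum_image (f := fun g => ∏ i : Fin n, (x ^ (1 + (i:ℕ))) ^ (g i)) hinj).symm
    _ ≤ ∑ g ∈ Fintype.piFinset (fun _ : Fin n => range (n+1)),
          ∏ i : Fin n, (x ^ (1 + (i:ℕ))) ^ (g i) := by
        apply Finset.sum_le_sum_of_subset_of_nonneg
        · intro g hg
          obtain ⟨σ, hσ, rfl⟩ := Finset.mem_image.mp hg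
          exact hmem σ hσ
        · intro g _ _; positivity
    _ = ∏ i : Fin n, ∑ c ∈ range (n+1), (x ^ (1 + (i:ℕ))) ^ c :=
        (Finset.prod_univ_sum _ _).symm
    _ = ∏ j ∈ Icc 1 n, ∑ i ∈ range (n+1), (x^j)^i := by
        rw [Fin.prod_univ_eq_prod_range (fun i => ∑ c ∈ range (n+1), (x ^ (1 + i)) ^ c) n]
        rw [show Icc 1 n = Ico 1 (n+1) by rfl, Finset.prod_Ico_eq_prod_range]
        simp only [Nat.add_sub_cancel]

/-- The number of overpartitions of `n`. -/
noncomputable def overpartition (n : ℕ) : ℕ :=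
  ∑ k ∈ Finset.range (n + 1),
    (Nat.Partition.distincts k).card * Fintype.card (Nat.Partition (n - k))

theorem overpartition_lt_exp (n : ℕ) (hn : 1 ≤ n) :
    (overpartition n : ℝ) < Real.exp (π * Real.sqrt n) := by
  have hπ : (0:ℝ) < π := Real.pi_pos
  have hsn : (0:ℝ) < Real.sqrt n := Real.sqrt_pos.mpr (by exact_mod_cast hn)
  set t : ℝ := 2 * Real.sqrt n / π with htdef
  have ht : 0 < t := by positivity
  set x : ℝ := t / (1 + t) with hxdef
  have h1t : (0:ℝ) < 1 + t := by linarith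
  have hx0 : 0 < x := by positivity
  have hx1 : x < 1 := by
    rw [hxdef, div_lt_one h1t]; linarith
  have hxt : x / (1 - x) = t := by
    rw [hxdef]; field_simp; ring
  have hxinv : x⁻¹ = 1 + 1/t := by
    rw [hxdef]; field_simp; ring
  -- abbreviations
  set A := ∑ k ∈ range (n+1), ((Nat.Partition.distincts k).card : ℝ) * x^k with hA
  set B := ∑ m ∈ range (n+1), (Fintype.card (Nat.Partition m) : ℝ) * x^m with hB
  have hBnonneg : 0 ≤ B := by
    apply Finset.sum_nonneg; intro m _; positivity
  have hkey : (overpartition n : ℝ) * x^n ≤ Real.exp (π^2/4 * t) := by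
    have h1 : (overpartition n : ℝ) * x^n
        = ∑ k ∈ range (n+1), (((Nat.Partition.distincts k).card : ℝ) * x^k)
            * ((Fintype.card (Nat.Partition (n-k)) : ℝ) * x^(n-k)) := by
      rw [overpartition]
      push_cast
      rw [Finset.sum_mul]
      refine Finset.sum_congr rfl fun k hk => ?_
      have hkn : k ≤ n := by
        have := Finset.mem_range.mp hk; omega
      have hxx : x^k * x^(n-k) = x^n := by
        rw [← pow_add, Nat.add_sub_cancel' hkn]
      rw [← hxx]; ring
    have h2 : ∑ k ∈ range (n+1), (((Nat.Partition.distincts k).card : ℝ) * x^k)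
            * ((Fintype.card (Nat.Partition (n-k)) : ℝ) * x^(n-k)) ≤ A * B := by
      rw [hA, Finset.sum_mul]
      apply Finset.sum_le_sum
      intro k hk
      apply mul_le_mul_of_nonneg_left _ (by positivity)
      apply Finset.single_le_sum (f := fun m => (Fintype.card (Nat.Partition m) : ℝ) * x^m)
        (fun m _ => by positivity)
      exact Finset.mem_range.mpr (by omega)
    have h3 : A * B ≤ (∏ j ∈ Icc 1 n, (1 + x^j)) * ∏ j ∈ Icc 1 n, ∑ i ∈ range (n+1), (x^j)^i := by
      apply mul_le_mul (sum_distincts_le n hx0.le) (sum_partitions_le n hx0.le) hBnonneg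
      apply Finset.prod_nonneg; intro j _; positivity
    have h4 : (∏ j ∈ Icc 1 n, (1 + x^j)) * (∏ j ∈ Icc 1 n, ∑ i ∈ range (n+1), (x^j)^i)
        ≤ ∏ j ∈ Icc 1 n, ((1 + x^j) / (1 - x^j)) := by
      rw [← Finset.prod_mul_distrib]
      apply Finset.prod_le_prod
      · intro j _; positivity
      · intro j hj
        have hj1 : 1 ≤ j := (Finset.mem_Icc.mp hj).1
        have hxj0 : (0:ℝ) ≤ x^j := by positivity
        have hxj1 : x^j < 1 := pow_lt_one₀ hx0.le hx1 (by omega)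
        have hgs : ∑ i ∈ range (n+1), (x^j)^i ≤ (1 - x^j)⁻¹ := by
          calc ∑ i ∈ range (n+1), (x^j)^i ≤ ∑' i : ℕ, (x^j)^i := by
                apply Summable.sum_le_tsum
                · intro i _; positivity
                · exact summable_geometric_of_lt_one hxj0 hxj1
            _ = (1 - x^j)⁻¹ := tsum_geometric_of_lt_one hxj0 hxj1
        calc (1 + x^j) * ∑ i ∈ range (n+1), (x^j)^i ≤ (1 + x^j) * (1 - x^j)⁻¹ :=
              mul_le_mul_of_nonneg_left hgs (by positivity)
          _ = (1 + x^j) / (1 - x^j) := (div_eq_mul_inv _ _).symm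
    calc (overpartition n : ℝ) * x^n ≤ A * B := by rw [h1]; exact h2
      _ ≤ _ := le_trans h3 h4
      _ ≤ Real.exp (π^2/4 * (x/(1-x))) := prod_bound n hx0 hx1
      _ = Real.exp (π^2/4 * t) := by rw [hxt]
  -- conclude
  have hxpow : (0:ℝ) < x^n := pow_pos hx0 n
  have h5 : (overpartition n : ℝ) ≤ Real.exp (π^2/4 * t) * (x⁻¹)^n := by
    have := mul_le_mul_of_nonneg_right hkey (le_of_lt (pow_pos (inv_pos.mpr hx0) n))
    calc (overpartition n : ℝ) = (overpartition n : ℝ) * x^n * (x⁻¹)^n := by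
          rw [mul_assoc, ← mul_pow, mul_inv_cancel₀ hx0.ne', one_pow, mul_one]
      _ ≤ Real.exp (π^2/4 * t) * (x⁻¹)^n := this
  have h6 : (x⁻¹)^n < Real.exp (1/t) ^ n := by
    apply pow_lt_pow_left₀ _ (inv_pos.mpr hx0).le (by omega)
    rw [hxinv]
    have := Real.add_one_lt_exp (x := 1/t) (ne_of_gt (by positivity))
    linarith
  have h7 : Real.exp (π^2/4 * t) * Real.exp (1/t) ^ n = Real.exp (π * Real.sqrt n) := by
    rw [← Real.exp_nat_mul, ← Real.exp_add]
    congr 1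
    have hsq : Real.sqrt n * Real.sqrt n = (n:ℝ) := Real.mul_self_sqrt (Nat.cast_nonneg n)
    rw [htdef]
    field_simp
    nlinarith [hsq, hπ, hsn]
  calc (overpartition n : ℝ) ≤ Real.exp (π^2/4 * t) * (x⁻¹)^n := h5
    _ < Real.exp (π^2/4 * t) * Real.exp (1/t) ^ n := by
        exact mul_lt_mul_of_pos_left h6 (Real.exp_pos _)
    _ = Real.exp (π * Real.sqrt n) := h7
end

section
/- For every real n₁ ≥ 109, 2π√n₁ − π√(2n₁) > log(0.6648·8·n₁/(0.0019)²) + log((1 + 1/√(2n₁))/((1 − 1/√n₁)²)). -/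
open Real

theorem T_gt_log_c3 (n₁ : ℝ) (hn₁ : 109 ≤ n₁) :
    2 * π * Real.sqrt n₁ - π * Real.sqrt (2 * n₁) >
      Real.log (0.6648 * 8 * n₁ / (0.0019 : ℝ) ^ 2) +
        Real.log ((1 + 1 / Real.sqrt (2 * n₁)) / (1 - 1 / Real.sqrt n₁) ^ 2) := by
  have hn0 : (0:ℝ) < n₁ := by linarith
  set s := Real.sqrt n₁ with hs_def
  have hs : 10.44 ≤ s := by
    rw [hs_def, show (10.44:ℝ) = Real.sqrt (10.44^2) from (Real.sqrt_sq (by norm_num)).symm]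
    exact Real.sqrt_le_sqrt (by nlinarith)
  have hs0 : (0:ℝ) < s := by linarith
  have hsq : s ^ 2 = n₁ := Real.sq_sqrt hn0.le
  have h2n : Real.sqrt (2 * n₁) = Real.sqrt 2 * s := Real.sqrt_mul (by norm_num) n₁
  have hr2l : (1.4142:ℝ) ≤ Real.sqrt 2 := by
    rw [show (1.4142:ℝ) = Real.sqrt (1.4142^2) from (Real.sqrt_sq (by norm_num)).symm]
    exact Real.sqrt_le_sqrt (by norm_num)
  have hr2u : Real.sqrt 2 ≤ 1.41422 := by
    rw [show (1.41422:ℝ) = Real.sqrt (1.41422^2) from (Real.sqrt_sq (by norm_num)).symm]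
    exact Real.sqrt_le_sqrt (by norm_num)
  -- bound the first log
  have hA : Real.log (0.6648 * 8 * n₁ / (0.0019:ℝ)^2)
      ≤ 18.9 + (2 * (s/10.44) - 2) := by
    have hsplit : (0.6648 * 8 * n₁ / (0.0019:ℝ)^2)
        = (0.6648 * 8 * 109 / (0.0019:ℝ)^2) * (n₁ / 109) := by ring
    have hC : Real.log (0.6648 * 8 * 109 / (0.0019:ℝ)^2) ≤ 18.9 := by
      have hx : (0:ℝ) < 0.6648 * 8 * 109 / (0.0019:ℝ)^2 := by norm_num
      have h19 : (2.7182818283:ℝ)^19 < Real.exp 19 := by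
        have := Real.exp_one_gt_d9
        calc (2.7182818283:ℝ)^19 < (Real.exp 1)^19 :=
              pow_lt_pow_left₀ this (by norm_num) (by norm_num)
          _ = Real.exp 19 := by
              rw [← Real.exp_nat_mul]; norm_num
      have hme : (0.9:ℝ) ≤ Real.exp (-0.1) := by
        have := Real.add_one_le_exp (-0.1:ℝ); linarith
      have hexp : Real.exp (18.9:ℝ) = Real.exp 19 * Real.exp (-0.1) := by
        rw [← Real.exp_add]; norm_num
      have hlt : (0.6648 * 8 * 109 / (0.0019:ℝ)^2) < Real.exp (18.9:ℝ) := by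
        rw [hexp]
        calc (0.6648 * 8 * 109 / (0.0019:ℝ)^2) ≤ (2.7182818283:ℝ)^19 * 0.9 := by norm_num
          _ < Real.exp 19 * 0.9 := by nlinarith [Real.exp_pos (19:ℝ)]
          _ ≤ Real.exp 19 * Real.exp (-0.1) := by nlinarith [Real.exp_pos (19:ℝ)]
      exact le_of_lt ((Real.log_lt_iff_lt_exp hx).mpr hlt)
    have hn109 : Real.log (n₁ / 109) ≤ 2 * (s/10.44) - 2 := by
      have h1 : n₁ / 109 ≤ (s/10.44)^2 := by
        rw [div_pow, ← hsq]
        have h2 : (0:ℝ) < s^2 := by positivity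
        rw [div_le_div_iff₀ (by norm_num) (by norm_num)]
        nlinarith
      have h0 : (0:ℝ) < n₁ / 109 := by positivity
      calc Real.log (n₁ / 109) ≤ Real.log ((s/10.44)^2) := Real.log_le_log h0 h1
        _ = 2 * Real.log (s/10.44) := by
            rw [Real.log_pow]; push_cast; ring
        _ ≤ 2 * (s/10.44 - 1) := by
            have := Real.log_le_sub_one_of_pos (show (0:ℝ) < s/10.44 by positivity)
            linarith
        _ = 2 * (s/10.44) - 2 := by ring
    rw [hsplit, Real.log_mul (by norm_num) (by positivity)]
    linarith
  -- bound the second log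
  have hsi : 1/s ≤ 1/10.44 := one_div_le_one_div_of_le (by norm_num) hs
  have hs1 : (0:ℝ) < 1 - 1/s := by linarith
  have hr2s : (14.76:ℝ) ≤ Real.sqrt 2 * s := by nlinarith
  have hu0 : (0:ℝ) < 1 / (Real.sqrt 2 * s) := by positivity
  have hu : 1 / (Real.sqrt 2 * s) ≤ 0.0678 := by
    rw [div_le_iff₀ (by linarith)]; linarith
  have hB : Real.log ((1 + 1 / (Real.sqrt 2 * s)) / (1 - 1/s)^2)
      ≤ 0.0678 + 2 * (1/9.44) := by
    have hnum : (0:ℝ) < 1 + 1 / (Real.sqrt 2 * s) := by linarith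
    have hden : (0:ℝ) < (1 - 1/s)^2 := by positivity
    rw [Real.log_div (by linarith) (by positivity)]
    have h1 : Real.log (1 + 1 / (Real.sqrt 2 * s)) ≤ 0.0678 := by
      have := Real.log_le_sub_one_of_pos hnum
      linarith
    have h2 : -Real.log ((1 - 1/s)^2) ≤ 2 * (1/9.44) := by
      have hlb : (9.44/10.44:ℝ) ≤ 1 - 1/s := by linarith
      have hinvle : (1 - 1/s)⁻¹ ≤ ((9.44:ℝ)/10.44)⁻¹ :=
        inv_anti₀ (by norm_num) hlb
      have hlog : Real.log ((1 - 1/s)⁻¹) ≤ (1 - 1/s)⁻¹ - 1 :=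
        Real.log_le_sub_one_of_pos (by positivity)
      have hneg : -Real.log (1 - 1/s) ≤ 1/9.44 := by
        rw [← Real.log_inv]
        have hval : ((9.44:ℝ)/10.44)⁻¹ - 1 ≤ 1/9.44 := by norm_num
        linarith
      rw [Real.log_pow]
      push_cast
      linarith
    linarith
  -- finish
  rw [h2n]
  have hc : (1.84028:ℝ) ≤ π * (2 - Real.sqrt 2) := by
    nlinarith [Real.pi_gt_d6, Real.sqrt_nonneg 2]
  have hlhs : 2 * π * s - π * (Real.sqrt 2 * s) = (π * (2 - Real.sqrt 2)) * s := by ring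
  have hmul : (1.84028:ℝ) * s ≤ (π * (2 - Real.sqrt 2)) * s :=
    mul_le_mul_of_nonneg_right hc hs0.le
  rw [hlhs]
  have hdiv : 2 * (s/10.44) = (2/10.44) * s := by ring
  linarith [hA, hB]
end
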